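/- There exists an absolute constant C > 0 such that for every δ ∈ (0,1) and every natural number n, (1/A_n^δ) · ∫_{Γ₁} | Σ_{k=0}^{n} A_{n−k}^{δ−1} · D*_k(u1,u2) | du1 du2 ≤ C, where Γ₁ = {(u1,u2) ∈ Γ : u1 ≤ 1/(n+1)}. -/

import Mathlib

open MeasureTheory Finset

/-- The triangle `Γ = {(u₁,u₂) : 0 ≤ u₂ ≤ u₁/3, 0 ≤ u₁ ≤ 1}`. -/
def GammaT : Set (ℝ × ℝ) := {u | 0 ≤ u.2 ∧ u.2 ≤ u.1 / 3 ∧ 0 ≤ u.1 ∧ u.1 ≤ 1}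

open Finset in
/-- Cesàro numbers: `A_n^δ = (δ+1)(δ+2)⋯(δ+n)/n!`, with `A_0^δ = 1`. -/
noncomputable def cesaroA (δ : ℝ) (n : ℕ) : ℝ :=
  (∏ i ∈ Finset.range n, (δ + i + 1)) / n.factorial

/-- The transformed hexagonal Dirichlet kernel `D*_k`. -/
noncomputable def DstarK (k : ℕ) (u : ℝ × ℝ) : ℝ :=
  (Real.sin (((k : ℝ) + 1) * Real.pi * u.2) *
      Real.sin (((k : ℝ) + 1) * Real.pi * (u.1 + u.2) / 2) *
      Real.sin (((k : ℝ) + 1) * Real.pi * (u.1 - u.2) / 2) -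
    Real.sin ((k : ℝ) * Real.pi * u.2) *
      Real.sin ((k : ℝ) * Real.pi * (u.1 + u.2) / 2) *
      Real.sin ((k : ℝ) * Real.pi * (u.1 - u.2) / 2)) /
    (Real.sin (Real.pi * u.2) * Real.sin (Real.pi * (u.1 + u.2) / 2) *
      Real.sin (Real.pi * (u.1 - u.2) / 2))

lemma cesaroA_pos {δ : ℝ} (hδ : -1 < δ) (n : ℕ) : 0 < cesaroA δ n := by
  unfold cesaroA
  apply div_pos
  · exact Finset.prod_pos fun i _ => by
      have : (0:ℝ) ≤ i := Nat.cast_nonneg i; linarith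
  · exact_mod_cast Nat.factorial_pos n

lemma cesaroA_zero (δ : ℝ) : cesaroA δ 0 = 1 := by simp [cesaroA]

lemma cesaroA_succ_eq (δ : ℝ) (n : ℕ) :
    cesaroA δ (n+1) = cesaroA δ n + cesaroA (δ-1) (n+1) := by
  unfold cesaroA
  rw [Finset.prod_range_succ, Finset.prod_range_succ' (fun i => δ - 1 + (i:ℝ) + 1) n]
  have h1 : (fun i : ℕ => δ - 1 + ((i+1 : ℕ):ℝ) + 1) = fun i : ℕ => δ + i + 1 := by
    funext i; push_cast; ring
  simp only [h1, Nat.cast_zero]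
  have hfn : (0:ℝ) < n.factorial := by exact_mod_cast Nat.factorial_pos n
  have hf : ((n+1).factorial : ℝ) = ((n:ℝ)+1) * n.factorial := by
    rw [Nat.factorial_succ]; push_cast; ring
  rw [hf]
  have hn1 : ((n:ℝ)+1) ≠ 0 := by positivity
  field_simp
  ring

lemma cesaroA_sum (δ : ℝ) (n : ℕ) :
    ∑ j ∈ Finset.range (n+1), cesaroA (δ-1) j = cesaroA δ n := by
  induction n with
  | zero => simp [cesaroA]
  | succ n ih =>
    rw [Finset.sum_range_succ, ih]
    exact (cesaroA_succ_eq δ n).symm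

lemma abs_sin_sub_sin (x y : ℝ) : |Real.sin x - Real.sin y| ≤ |x - y| := by
  rw [Real.sin_sub_sin]
  have hs : |Real.sin ((x-y)/2)| ≤ |x - y| / 2 := by
    refine Real.abs_sin_le_abs.trans ?_
    rw [abs_div]; norm_num
  have hc : |Real.cos ((x+y)/2)| ≤ 1 := Real.abs_cos_le_one _
  have : |2 * Real.sin ((x-y)/2) * Real.cos ((x+y)/2)|
      = 2 * |Real.sin ((x-y)/2)| * |Real.cos ((x+y)/2)| := by
    rw [abs_mul, abs_mul, abs_two]
  rw [this]
  nlinarith [abs_nonneg (Real.sin ((x-y)/2)), abs_nonneg (Real.cos ((x+y)/2))]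

lemma sin_ge_half {t : ℝ} (h0 : 0 ≤ t) (h1 : t ≤ Real.pi / 2) : t/2 ≤ Real.sin t := by
  have h := Real.mul_le_sin h0 h1
  have hπ := Real.pi_le_four
  have hπ0 := Real.pi_pos
  have h12 : (1:ℝ)/2 ≤ 2 / Real.pi := by
    rw [div_le_div_iff₀ (by norm_num) hπ0]; linarith
  nlinarith

lemma key_num_bound (m x a b : ℝ) (hm : 0 ≤ m) (hx : 0 ≤ x) (ha : 0 ≤ a) (hb : 0 ≤ b) :
    |Real.sin ((m+1)*x) * Real.sin ((m+1)*a) * Real.sin ((m+1)*b) -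
      Real.sin (m*x) * Real.sin (m*a) * Real.sin (m*b)| ≤ 3*(m+1)^2*(x*a*b) := by
  set s1 := Real.sin ((m+1)*x); set s2 := Real.sin ((m+1)*a); set s3 := Real.sin ((m+1)*b)
  set t1 := Real.sin (m*x); set t2 := Real.sin (m*a); set t3 := Real.sin (m*b)
  have h1 : |s1 - t1| ≤ x := by
    have := abs_sin_sub_sin ((m+1)*x) (m*x)
    have e : (m+1)*x - m*x = x := by ring
    rw [e, abs_of_nonneg hx] at this; exact this
  have h2 : |s2 - t2| ≤ a := by
    have := abs_sin_sub_sin ((m+1)*a) (m*a)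
    have e : (m+1)*a - m*a = a := by ring
    rw [e, abs_of_nonneg ha] at this; exact this
  have h3 : |s3 - t3| ≤ b := by
    have := abs_sin_sub_sin ((m+1)*b) (m*b)
    have e : (m+1)*b - m*b = b := by ring
    rw [e, abs_of_nonneg hb] at this; exact this
  have hs2 : |s2| ≤ (m+1)*a := by
    refine Real.abs_sin_le_abs.trans ?_
    rw [abs_of_nonneg (by positivity)]
  have hs3 : |s3| ≤ (m+1)*b := by
    refine Real.abs_sin_le_abs.trans ?_
    rw [abs_of_nonneg (by positivity)]
  have ht1 : |t1| ≤ (m+1)*x := by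
    refine Real.abs_sin_le_abs.trans ?_
    rw [abs_of_nonneg (by positivity)]
    nlinarith
  have ht2 : |t2| ≤ (m+1)*a := by
    refine Real.abs_sin_le_abs.trans ?_
    rw [abs_of_nonneg (by positivity)]
    nlinarith
  have e : s1*s2*s3 - t1*t2*t3 = (s1-t1)*s2*s3 + t1*(s2-t2)*s3 + t1*t2*(s3-t3) := by ring
  rw [e]
  have T1 : |(s1-t1)*s2*s3| ≤ x*((m+1)*a)*((m+1)*b) := by
    rw [abs_mul, abs_mul]
    gcongr <;> positivity
  have T2 : |t1*(s2-t2)*s3| ≤ ((m+1)*x)*a*((m+1)*b) := by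
    rw [abs_mul, abs_mul]
    gcongr <;> positivity
  have T3 : |t1*t2*(s3-t3)| ≤ ((m+1)*x)*((m+1)*a)*b := by
    rw [abs_mul, abs_mul]
    gcongr <;> positivity
  have A1 := abs_add_le ((s1-t1)*s2*s3 + t1*(s2-t2)*s3) (t1*t2*(s3-t3))
  have A2 := abs_add_le ((s1-t1)*s2*s3) (t1*(s2-t2)*s3)
  nlinarith

lemma DstarK_bound (k : ℕ) (u : ℝ × ℝ) (h02 : 0 ≤ u.2) (h23 : u.2 ≤ u.1 / 3)
    (hu1 : u.1 ≤ 1/2) : |DstarK k u| ≤ 24 * ((k:ℝ)+1)^2 := by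
  rcases eq_or_lt_of_le h02 with h | h
  · unfold DstarK
    rw [← h]
    simp
    positivity
  · have hπ := Real.pi_pos
    have hπ4 := Real.pi_le_four
    have hu2 : u.2 ≤ 1/6 := by linarith
    have hu1pos : 0 < u.1 := by linarith
    unfold DstarK
    rw [show ((k:ℝ)+1) * Real.pi * u.2 = ((k:ℝ)+1) * (Real.pi * u.2) from by ring,
        show ((k:ℝ)+1) * Real.pi * (u.1 + u.2) / 2 = ((k:ℝ)+1) * (Real.pi * (u.1 + u.2) / 2) from by ring,
        show ((k:ℝ)+1) * Real.pi * (u.1 - u.2) / 2 = ((k:ℝ)+1) * (Real.pi * (u.1 - u.2) / 2) from by ring,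
        show (k:ℝ) * Real.pi * u.2 = (k:ℝ) * (Real.pi * u.2) from by ring,
        show (k:ℝ) * Real.pi * (u.1 + u.2) / 2 = (k:ℝ) * (Real.pi * (u.1 + u.2) / 2) from by ring,
        show (k:ℝ) * Real.pi * (u.1 - u.2) / 2 = (k:ℝ) * (Real.pi * (u.1 - u.2) / 2) from by ring]
    set p := Real.pi * u.2 with hp
    set q := Real.pi * (u.1 + u.2) / 2 with hq
    set r := Real.pi * (u.1 - u.2) / 2 with hr
    have hp0 : 0 < p := by rw [hp]; positivity
    have hq0 : 0 < q := by rw [hq]; positivity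
    have hr0 : 0 < r := by
      rw [hr]; exact div_pos (mul_pos hπ (by linarith)) (by norm_num)
    have hp2 : p ≤ Real.pi / 2 := by rw [hp]; nlinarith
    have hq2 : q ≤ Real.pi / 2 := by rw [hq]; nlinarith
    have hr2 : r ≤ Real.pi / 2 := by rw [hr]; nlinarith
    have hsp := sin_ge_half hp0.le hp2
    have hsq := sin_ge_half hq0.le hq2
    have hsr := sin_ge_half hr0.le hr2
    have hden : p/2 * (q/2) * (r/2) ≤ Real.sin p * Real.sin q * Real.sin r := by
      apply mul_le_mul (mul_le_mul hsp hsq (by positivity) (by linarith)) hsr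
        (by positivity)
      nlinarith
    have hdpos : 0 < Real.sin p * Real.sin q * Real.sin r :=
      lt_of_lt_of_le (by positivity) hden
    rw [abs_div, abs_of_pos hdpos, div_le_iff₀ hdpos]
    have hnum := key_num_bound (k:ℝ) p q r (Nat.cast_nonneg k) hp0.le hq0.le hr0.le
    have hmul := mul_le_mul_of_nonneg_left hden
      (show (0:ℝ) ≤ 24 * ((k:ℝ)+1)^2 by positivity)
    nlinarith

theorem stmt_12 :
    ∃ C : ℝ, 0 < C ∧
      ∀ δ : ℝ, 0 < δ → δ < 1 → ∀ n : ℕ,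
        (1 / cesaroA δ n) *
            ∫ u in GammaT ∩ {u : ℝ × ℝ | u.1 ≤ 1 / ((n : ℝ) + 1)},
              |∑ k ∈ Finset.range (n + 1), cesaroA (δ - 1) (n - k) * DstarK k u| ≤ C := by
  refine ⟨8, by norm_num, ?_⟩
  intro δ hδ0 hδ1 n
  have hA : 0 < cesaroA δ n := cesaroA_pos (by linarith) n
  have hn1 : (0:ℝ) < (n:ℝ) + 1 := by positivity
  set s : Set (ℝ × ℝ) := GammaT ∩ {u : ℝ × ℝ | u.1 ≤ 1 / ((n : ℝ) + 1)} with hsdef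
  have hsm : MeasurableSet s := by
    apply MeasurableSet.inter
    · exact (measurableSet_le measurable_const measurable_snd).inter
        ((measurableSet_le measurable_snd (measurable_fst.div_const 3)).inter
          ((measurableSet_le measurable_const measurable_fst).inter
            (measurableSet_le measurable_fst measurable_const)))
    · exact measurableSet_le measurable_fst measurable_const
  have hsub : s ⊆ Set.Icc (0:ℝ) (1/((n:ℝ)+1)) ×ˢ Set.Icc (0:ℝ) (1/(3*((n:ℝ)+1))) := by
    rintro ⟨u1, u2⟩ ⟨⟨h1, h2, h3, h4⟩, h5⟩
    simp only [Set.mem_setOf_eq] at h5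
    simp only [Set.mem_prod, Set.mem_Icc]
    have e : (1:ℝ)/(3*((n:ℝ)+1)) = (1/((n:ℝ)+1))/3 := by
      field_simp
    exact ⟨⟨h3, h5⟩, h1, by rw [e]; linarith⟩
  have hμle : volume s ≤ ENNReal.ofReal (1/((n:ℝ)+1)) * ENNReal.ofReal (1/(3*((n:ℝ)+1))) := by
    calc volume s ≤ volume (Set.Icc (0:ℝ) (1/((n:ℝ)+1)) ×ˢ Set.Icc (0:ℝ) (1/(3*((n:ℝ)+1)))) :=
          measure_mono hsub
      _ = ENNReal.ofReal (1/((n:ℝ)+1)) * ENNReal.ofReal (1/(3*((n:ℝ)+1))) := by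
          rw [Measure.volume_eq_prod, Measure.prod_prod, Real.volume_Icc, Real.volume_Icc,
            sub_zero, sub_zero]
  have hμfin : volume s < ⊤ :=
    lt_of_le_of_lt hμle (ENNReal.mul_lt_top ENNReal.ofReal_lt_top ENNReal.ofReal_lt_top)
  have htr : (volume s).toReal ≤ 1/(3*((n:ℝ)+1)^2) := by
    have h1 : (volume s).toReal
        ≤ (ENNReal.ofReal (1/((n:ℝ)+1)) * ENNReal.ofReal (1/(3*((n:ℝ)+1)))).toReal :=
      ENNReal.toReal_mono
        (ENNReal.mul_lt_top ENNReal.ofReal_lt_top ENNReal.ofReal_lt_top).ne hμle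
    rw [ENNReal.toReal_mul, ENNReal.toReal_ofReal (by positivity),
      ENNReal.toReal_ofReal (by positivity)] at h1
    have e : (1/((n:ℝ)+1)) * (1/(3*((n:ℝ)+1))) = 1/(3*((n:ℝ)+1)^2) := by
      field_simp
    rw [e] at h1; exact h1
  have hpt : ∀ u ∈ s, |∑ k ∈ Finset.range (n+1), cesaroA (δ-1) (n-k) * DstarK k u|
      ≤ 24 * ((n:ℝ)+1)^2 * cesaroA δ n := by
    intro u hu
    obtain ⟨⟨h1, h2, h3, h4⟩, h5⟩ := hu
    simp only [Set.mem_setOf_eq] at h5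
    rcases Nat.eq_zero_or_pos n with hn | hn
    · simp only [hn, Nat.cast_zero, zero_add, one_pow, mul_one, Finset.sum_range_one,
        Nat.sub_zero, cesaroA_zero, one_mul]
      have hd : DstarK 0 u =
          (Real.sin (Real.pi*u.2) * Real.sin (Real.pi*(u.1+u.2)/2) *
            Real.sin (Real.pi*(u.1-u.2)/2)) /
          (Real.sin (Real.pi*u.2) * Real.sin (Real.pi*(u.1+u.2)/2) *
            Real.sin (Real.pi*(u.1-u.2)/2)) := by
        unfold DstarK; norm_num
      rw [hd]
      rcases eq_or_ne (Real.sin (Real.pi*u.2) * Real.sin (Real.pi*(u.1+u.2)/2) *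
          Real.sin (Real.pi*(u.1-u.2)/2)) 0 with hz | hz
      · rw [hz]; norm_num
      · rw [div_self hz]; norm_num
    · have hu12 : u.1 ≤ 1/2 := by
        have h2n : (2:ℝ) ≤ (n:ℝ)+1 := by
          have : (1:ℝ) ≤ (n:ℝ) := by exact_mod_cast hn
          linarith
        have := one_div_le_one_div_of_le (by norm_num : (0:ℝ) < 2) h2n
        linarith
      calc |∑ k ∈ Finset.range (n+1), cesaroA (δ-1) (n-k) * DstarK k u|
          ≤ ∑ k ∈ Finset.range (n+1), |cesaroA (δ-1) (n-k) * DstarK k u| :=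
            Finset.abs_sum_le_sum_abs _ _
        _ ≤ ∑ k ∈ Finset.range (n+1), cesaroA (δ-1) (n-k) * (24*((n:ℝ)+1)^2) := by
            apply Finset.sum_le_sum
            intro k hk
            have hc : 0 < cesaroA (δ-1) (n-k) := cesaroA_pos (by linarith) _
            rw [abs_mul, abs_of_pos hc]
            apply mul_le_mul_of_nonneg_left _ hc.le
            refine (DstarK_bound k u h1 h2 hu12).trans ?_
            have hkn : (k:ℝ) ≤ n := by
              exact_mod_cast Nat.lt_succ_iff.mp (Finset.mem_range.mp hk)
            nlinarith [Nat.cast_nonneg (α := ℝ) k]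
        _ = (∑ k ∈ Finset.range (n+1), cesaroA (δ-1) (n-k)) * (24*((n:ℝ)+1)^2) := by
            rw [← Finset.sum_mul]
        _ = cesaroA δ n * (24*((n:ℝ)+1)^2) := by
            congr 1
            have hr := Finset.sum_range_reflect (fun j => cesaroA (δ-1) j) (n+1)
            simp only [Nat.add_sub_cancel] at hr
            rw [hr]
            exact cesaroA_sum δ n
        _ = 24 * ((n:ℝ)+1)^2 * cesaroA δ n := by ring
  have hint : (∫ u in s, |∑ k ∈ Finset.range (n+1), cesaroA (δ-1) (n-k) * DstarK k u|)
      ≤ 24 * ((n:ℝ)+1)^2 * cesaroA δ n * (volume s).toReal := by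
    have hnorm := norm_setIntegral_le_of_norm_le_const_ae' (μ := volume) hμfin
      (f := fun u => |∑ k ∈ Finset.range (n+1), cesaroA (δ-1) (n-k) * DstarK k u|)
      (Filter.Eventually.of_forall (fun u hu => by
        rw [Real.norm_eq_abs, abs_abs]; exact hpt u hu))
    rw [Real.norm_eq_abs] at hnorm
    exact le_trans (le_abs_self _) hnorm
  have hBμ : 24 * ((n:ℝ)+1)^2 * cesaroA δ n * (volume s).toReal ≤ 8 * cesaroA δ n := by
    have h8 : 24*((n:ℝ)+1)^2 * (1/(3*((n:ℝ)+1)^2)) = 8 := by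
      field_simp; ring
    have hmul := mul_le_mul_of_nonneg_left htr (show (0:ℝ) ≤ 24*((n:ℝ)+1)^2 by positivity)
    have htnn : 0 ≤ (volume s).toReal := ENNReal.toReal_nonneg
    nlinarith
  calc (1 / cesaroA δ n) *
        ∫ u in s, |∑ k ∈ Finset.range (n+1), cesaroA (δ-1) (n-k) * DstarK k u|
      ≤ (1 / cesaroA δ n) * (8 * cesaroA δ n) := by
        apply mul_le_mul_of_nonneg_left (hint.trans hBμ) (by positivity)
    _ = 8 := by field_simp
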